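/- One degree containing both structures. There exist a nonrecursive limit computable set A ⊆ ℕ, a family {B_q}_{q ∈ ℚ ∩ (1,2)} of subsets of ℕ, and a family {W_n}_{n ∈ ℕ} of subsets of ℕ such that: (i) B_q ≡_bfo A for every q ∈ ℚ ∩ (1,2); (ii) W_n ≡_bfo A for every n ∈ ℕ; (iii) B_p <₁ B_q whenever p, q ∈ ℚ ∩ (1,2) and p < q; (iv) ¬(W_n ≤₁ W_m) whenever n ≠ m. Consequently, the bounded finite-one degree of A contains both a copy of (ℚ, ≤) and an infinite antichain of 1-degrees. -/

import Mathlib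

/-- One-one reducibility: `B ≤₁ C` via a total computable injective function. -/
def OneOneRed (B C : Set ℕ) : Prop :=
  ∃ f : ℕ → ℕ, Computable f ∧ Function.Injective f ∧ ∀ x, x ∈ B ↔ f x ∈ C

/-- Strict one-one reducibility: `B <₁ C`. -/
def OneOneLt (B C : Set ℕ) : Prop :=
  OneOneRed B C ∧ ¬ OneOneRed C B

/-- Bounded finite-one reducibility: `B ≤_bfo C` via a total computable function
all of whose fibers have size at most some constant `c ≥ 1`. -/
def BfoRed (B C : Set ℕ) : Prop :=
  ∃ f : ℕ → ℕ, Computable f ∧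
    (∃ c : ℕ, 1 ≤ c ∧ ∀ y, {x | f x = y}.encard ≤ (c : ℕ∞)) ∧
    ∀ x, x ∈ B ↔ f x ∈ C

/-- Bounded finite-one equivalence: `B ≡_bfo C`. -/
def BfoEquiv (B C : Set ℕ) : Prop :=
  BfoRed B C ∧ BfoRed C B

/-- `A` is limit computable (equivalently `A ≤_T ∅'`, i.e. `Δ⁰₂`). -/
def LimitComputable (A : Set ℕ) : Prop :=
  ∃ g : ℕ → ℕ → Bool, Computable₂ g ∧
    ∀ n, ∃ s₀, ∀ s, s₀ ≤ s → (g s n = true ↔ n ∈ A)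

/-- `a_k`, the left endpoint of the `k`-th block `I_k = [a_k, a_{k+1})`;
`a_0 = 0` and `a_{k+1} = a_k + k!`. -/
def blockStart (k : ℕ) : ℕ := ∑ m ∈ Finset.range k, Nat.factorial m

open Nat.Partrec (Code)
open Nat.Partrec.Code

namespace DCon

/-- The candidate-witness value encoded in `n = pair k t` against code index `e`. -/
def wOf (e n : ℕ) : ℕ :=
  (evaln n.unpair.2 (Denumerable.ofNat Code e) n.unpair.1).getD n.unpair.1

/-- Test whether `n = pair k t` is a diagonalization witness for code index `e`
at length `L`: `k ≥ L` and `evaln t (code e) k = some w` with `w ≠ k`. -/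
def diagB (e L n : ℕ) : Bool :=
  decide (L ≤ n.unpair.1) && decide (wOf e n ≠ n.unpair.1)

theorem diagB_iff {e L n : ℕ} :
    diagB e L n = true ↔
      L ≤ n.unpair.1 ∧ evaln n.unpair.2 (Denumerable.ofNat Code e) n.unpair.1 = some (wOf e n)
        ∧ wOf e n ≠ n.unpair.1 := by
  unfold diagB wOf
  cases h : evaln n.unpair.2 (Denumerable.ofNat Code e) n.unpair.1 <;> simp [h]

open Classical in
noncomputable def trueFind (e L : ℕ) : Option ℕ :=
  if h : ∃ n, diagB e L n = true then some (Nat.find h) else none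

def apxFind (b e L : ℕ) : Option ℕ :=
  Nat.rec none (fun m ih => ih <|> (if diagB e L m then some m else none)) b

theorem apxFind_none_of {e L b : ℕ} (h : ∀ n < b, diagB e L n = false) :
    apxFind b e L = none := by
  induction b with
  | zero => rfl
  | succ b ih =>
      simp only [apxFind] at ih ⊢
      rw [ih (fun n hn => h n (by omega)), h b (by omega)]
      rfl

theorem apxFind_some {e L : ℕ} (h : ∃ n, diagB e L n = true) {b : ℕ}
    (hb : Nat.find h < b) : apxFind b e L = some (Nat.find h) := by
  induction b with
  | zero => omega
  | succ b ih =>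
      rcases Nat.lt_succ_iff_lt_or_eq.1 hb with hb' | hb'
      · simp only [apxFind] at ih ⊢
        rw [ih hb']; rfl
      · have hnone : apxFind b e L = none := by
          refine apxFind_none_of fun n hn => ?_
          have := Nat.find_min h (hb' ▸ hn)
          simpa using this
        simp only [apxFind] at hnone ⊢
        rw [hnone]
        have := Nat.find_spec h
        rw [← hb', this]; simp [hb']

theorem apxFind_agree (e L : ℕ) : ∃ b₀, ∀ b, b₀ ≤ b → apxFind b e L = trueFind e L := by
  classical
  by_cases h : ∃ n, diagB e L n = true
  · exact ⟨Nat.find h + 1, fun b hb => by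
      rw [apxFind_some h (by omega), trueFind, dif_pos h]⟩
  · refine ⟨0, fun b _ => ?_⟩
    rw [apxFind_none_of (fun n _ => by
      by_contra hn; exact h ⟨n, by simpa using hn⟩), trueFind, dif_neg h]



def val (σ : List Bool) (n : ℕ) : Bool := σ.getD n false

theorem val_append_left {σ t : List Bool} {n : ℕ} (h : n < σ.length) :
    val (σ ++ t) n = val σ n := by
  simp [val, List.getD_eq_getElem?_getD, List.getElem?_append_left h]

theorem val_prefix {σ τ : List Bool} (h : σ <+: τ) {n : ℕ} (hn : n < σ.length) :
    val τ n = val σ n := by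
  obtain ⟨t, rfl⟩ := h
  exact val_append_left hn

theorem val_big {σ : List Bool} {n : ℕ} (h : σ.length ≤ n) : val σ n = false := by
  simp [val, List.getD_eq_getElem?_getD, List.getElem?_eq_none h]

theorem val_ext {l : List Bool} {a : ℕ} {v : Bool} {b : ℕ} {i : ℕ} :
    val (l ++ (List.replicate a false ++ ([v] ++ List.replicate b false))) i =
      if i < l.length then val l i
      else if i = l.length + a then v
      else false := by
  split_ifs with h1 h2
  · exact val_append_left h1
  · subst h2
    simp only [val, List.getD_eq_getElem?_getD,
      List.getElem?_append_right (Nat.le_add_right l.length a), Nat.add_sub_cancel_left]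
    rw [List.getElem?_append_right (by simp : (List.replicate a false).length ≤ a)]
    simp
  · have hl : l.length ≤ i := Nat.le_of_not_lt h1
    simp only [val, List.getD_eq_getElem?_getD, List.getElem?_append_right hl]
    rcases Nat.lt_or_ge (i - l.length) a with hc | hc
    · rw [List.getElem?_append_left (by simpa using hc)]
      simp [List.getElem?_replicate, hc]
    · rw [List.getElem?_append_right (by simpa using hc)]
      simp only [List.length_replicate]
      rw [List.getElem?_append_right (by simp; omega : ([v]:List Bool).length ≤ i - l.length - a)]
      simp only [List.getElem?_replicate, List.length_singleton]
      split_ifs <;> simp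



/-! ### The construction -/

def ext1 (s : ℕ) (σ : List Bool) : List Bool :=
  σ ++ (List.replicate (Nat.pair s.unpair.1 σ.length - σ.length) false ++
    ([true] ++ List.replicate 0 false))

def ext2 (s : ℕ) (σ : List Bool) : List Bool :=
  ext1 s σ ++ (List.replicate 0 false ++ ([false] ++ List.replicate 0 false))

def stepF (F : ℕ → ℕ → Option ℕ) (s : ℕ) (σ : List Bool) : List Bool :=
  match F s.unpair.1 (ext2 s σ).length with
  | none => ext2 s σ
  | some n =>
      ext2 s σ ++ (List.replicate (n.unpair.1 - (ext2 s σ).length) false ++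
        ([!val (ext2 s σ) (wOf s.unpair.1 n)] ++
          List.replicate (max n.unpair.1 (wOf s.unpair.1 n) - n.unpair.1) false))

def run (F : ℕ → ℕ → Option ℕ) : ℕ → List Bool
  | 0 => []
  | s + 1 => stepF F s (run F s)

noncomputable def DD : Set ℕ := {n | val (run trueFind (n + 1)) n = true}

theorem length_ext1 (s : ℕ) (σ : List Bool) :
    (ext1 s σ).length = Nat.pair s.unpair.1 σ.length + 1 := by
  have := Nat.right_le_pair s.unpair.1 σ.length
  simp [ext1]; omega

theorem length_ext2 (s : ℕ) (σ : List Bool) :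
    (ext2 s σ).length = Nat.pair s.unpair.1 σ.length + 2 := by
  simp [ext2, length_ext1]

theorem ext2_prefix (s : ℕ) (σ : List Bool) : σ <+: ext2 s σ := by
  refine List.IsPrefix.trans ?_ (List.prefix_append _ _)
  exact List.prefix_append _ _

theorem step_prefix (F : ℕ → ℕ → Option ℕ) (s : ℕ) (σ : List Bool) :
    σ <+: stepF F s σ := by
  unfold stepF
  cases F s.unpair.1 (ext2 s σ).length with
  | none => exact ext2_prefix s σ
  | some n => exact (ext2_prefix s σ).trans (List.prefix_append _ _)

theorem ext2_step_prefix (F : ℕ → ℕ → Option ℕ) (s : ℕ) (σ : List Bool) :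
    ext2 s σ <+: stepF F s σ := by
  unfold stepF
  cases F s.unpair.1 (ext2 s σ).length with
  | none => exact List.prefix_refl _
  | some n => exact List.prefix_append _ _

theorem length_run (F : ℕ → ℕ → Option ℕ) (s : ℕ) : s ≤ (run F s).length := by
  induction s with
  | zero => simp
  | succ s ih =>
      have h1 := (ext2_step_prefix F s (run F s)).length_le
      have h2 := length_ext2 s (run F s)
      have h3 := Nat.right_le_pair s.unpair.1 (run F s).length
      show s + 1 ≤ (stepF F s (run F s)).length
      omega

theorem run_prefix (F : ℕ → ℕ → Option ℕ) {s t : ℕ} (h : s ≤ t) :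
    run F s <+: run F t := by
  induction t with
  | zero => rw [Nat.le_zero.1 h]
  | succ t ih =>
      rcases Nat.le_succ_iff.1 h with h' | h'
      · exact (ih h').trans (step_prefix F t _)
      · rw [h']

theorem val_run_stable (F : ℕ → ℕ → Option ℕ) {s t n : ℕ} (h : s ≤ t)
    (hn : n < (run F s).length) : val (run F t) n = val (run F s) n :=
  val_prefix (run_prefix F h) hn

theorem mem_DD_iff {n s : ℕ} (h : n < (run trueFind s).length) :
    n ∈ DD ↔ val (run trueFind s) n = true := by
  have h1 : n < (run trueFind (n + 1)).length := length_run _ _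
  have e1 := val_run_stable trueFind (le_max_left s (n + 1)) h
  have e2 := val_run_stable trueFind (le_max_right s (n + 1)) h1
  show val (run trueFind (n + 1)) n = true ↔ _
  rw [← e1, ← e2]

/-- the position made `true` at stage `s` (R3 requirement) -/
def posT (F : ℕ → ℕ → Option ℕ) (s : ℕ) : ℕ := Nat.pair s.unpair.1 (run F s).length

theorem val_ext2_posT (s : ℕ) (σ : List Bool) :
    val (ext2 s σ) (Nat.pair s.unpair.1 σ.length) = true := by
  have hx : σ.length ≤ Nat.pair s.unpair.1 σ.length := Nat.right_le_pair _ _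
  have h1 : val (ext1 s σ) (Nat.pair s.unpair.1 σ.length) = true := by
    rw [ext1, val_ext]
    simp only [if_neg (by omega : ¬ Nat.pair s.unpair.1 σ.length < σ.length)]
    rw [if_pos (by omega)]
  rw [ext2, ← h1]
  exact val_append_left (by rw [length_ext1]; omega)

theorem val_ext2_posT_succ (s : ℕ) (σ : List Bool) :
    val (ext2 s σ) (Nat.pair s.unpair.1 σ.length + 1) = false := by
  rw [ext2, val_ext, length_ext1]
  simp

theorem posT_mem_DD (s : ℕ) : posT trueFind s ∈ DD := by
  set σ := run trueFind s
  have hlen : posT trueFind s < (run trueFind (s + 1)).length := by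
    have := (ext2_step_prefix trueFind s σ).length_le
    have := length_ext2 s σ
    show Nat.pair s.unpair.1 σ.length < (stepF trueFind s σ).length
    omega
  rw [mem_DD_iff hlen]
  have : val (run trueFind (s+1)) (posT trueFind s) = val (ext2 s σ) (posT trueFind s) := by
    refine val_prefix (ext2_step_prefix trueFind s σ) ?_
    show Nat.pair s.unpair.1 σ.length < _
    rw [length_ext2]; omega
  rw [this]
  exact val_ext2_posT s σ

theorem posT_succ_not_mem_DD (s : ℕ) : posT trueFind s + 1 ∉ DD := by
  set σ := run trueFind s
  have hlen : posT trueFind s + 1 < (run trueFind (s + 1)).length := by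
    have := (ext2_step_prefix trueFind s σ).length_le
    have := length_ext2 s σ
    show Nat.pair s.unpair.1 σ.length + 1 < (stepF trueFind s σ).length
    omega
  rw [mem_DD_iff hlen]
  have : val (run trueFind (s+1)) (posT trueFind s + 1) = val (ext2 s σ) (posT trueFind s + 1) := by
    refine val_prefix (ext2_step_prefix trueFind s σ) ?_
    show Nat.pair s.unpair.1 σ.length + 1 < _
    rw [length_ext2]; omega
  rw [this]
  have := val_ext2_posT_succ s σ
  simp only [posT]
  rw [Bool.not_eq_true]; exact this

theorem posT_ge (F : ℕ → ℕ → Option ℕ) (s : ℕ) : s ≤ posT F s :=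
  le_trans (length_run F s) (Nat.right_le_pair _ _)

theorem trueFind_some {e L n : ℕ} (h : trueFind e L = some n) : diagB e L n = true := by
  classical
  unfold trueFind at h
  split_ifs at h with h'
  · obtain rfl : Nat.find h' = n := Option.some.inj h
    exact Nat.find_spec h'

theorem trueFind_none {e L : ℕ} (h : trueFind e L = none) (n : ℕ) : diagB e L n = false := by
  classical
  unfold trueFind at h
  split_ifs at h with h'
  by_contra hn
  exact h' ⟨n, by simpa using hn⟩

theorem diag_stage {s n : ℕ}
    (h : trueFind s.unpair.1 (ext2 s (run trueFind s)).length = some n) :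
    ¬ (wOf s.unpair.1 n ∈ DD ↔ n.unpair.1 ∈ DD) := by
  set σ := run trueFind s with hσ
  set L := (ext2 s σ).length with hL
  set k := n.unpair.1 with hk2
  set w := wOf s.unpair.1 n with hw2
  have hd := trueFind_some h
  rw [diagB_iff] at hd
  obtain ⟨hLk, _, hwk⟩ := hd
  have hrun : run trueFind (s + 1) =
      ext2 s σ ++ (List.replicate (k - L) false ++
        ([!val (ext2 s σ) w] ++ List.replicate (max k w - k) false)) := by
    show stepF trueFind s σ = _
    unfold stepF
    rw [← hL, h]
  have hlen : (run trueFind (s + 1)).length = max k w + 1 := by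
    rw [hrun]; simp [← hL]; omega
  have hkv : val (run trueFind (s + 1)) k = !val (ext2 s σ) w := by
    rw [hrun, val_ext, if_neg (by omega), if_pos (by omega)]
  have hwv : val (run trueFind (s + 1)) w = val (ext2 s σ) w := by
    rcases Nat.lt_or_ge w L with hc | hc
    · rw [hrun]; exact val_append_left (by omega)
    · rw [hrun, val_ext, if_neg (by omega), if_neg (by omega), val_big hc]
  intro hiff
  have h1 : k ∈ DD ↔ (val (run trueFind (s + 1)) k = true) := mem_DD_iff (by omega)
  have h2 : w ∈ DD ↔ (val (run trueFind (s + 1)) w = true) := mem_DD_iff (by omega)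
  rw [hkv] at h1
  rw [hwv] at h2
  cases hval : val (ext2 s σ) w <;> simp [hval] at h1 h2 <;> tauto

/-- The key combinatorial property of `DD`: any computable total function that
preserves `DD`-membership moves only finitely many elements of `DD`. -/
theorem DD_key {h : ℕ → ℕ} (hc : Computable h) (hiff : ∀ k, (h k ∈ DD ↔ k ∈ DD)) :
    {k | k ∈ DD ∧ h k ≠ k}.Finite := by
  obtain ⟨c, hcode⟩ := Nat.Partrec.Code.exists_code.1 (Partrec.nat_iff.1 hc)
  set s := Nat.pair (Encodable.encode c) 0 with hs
  have he : s.unpair.1 = Encodable.encode c := by simp [hs]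
  have hon : Denumerable.ofNat Code s.unpair.1 = c := by rw [he]; simp
  set σ := run trueFind s with hσ
  set L := (ext2 s σ).length with hL
  cases htf : trueFind s.unpair.1 L with
  | some n =>
      exfalso
      have hd := trueFind_some htf
      rw [diagB_iff] at hd
      obtain ⟨hLk, hev, hwk⟩ := hd
      have hmem : wOf s.unpair.1 n ∈ eval c n.unpair.1 := by
        refine evaln_sound (k := n.unpair.2) ?_
        rw [hon] at hev
        simpa [Option.mem_def] using hev
      have hwh : wOf s.unpair.1 n = h n.unpair.1 := by
        rw [hcode] at hmem
        simpa using hmem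
      refine diag_stage htf ?_
      rw [hwh]
      exact hiff n.unpair.1
  | none =>
      refine Set.Finite.subset (Set.finite_lt_nat L) ?_
      rintro k ⟨-, hk⟩
      by_contra hkL'
      have hkL : L ≤ k := by simpa using hkL'
      have hmem : h k ∈ eval c k := by rw [hcode]; simp
      obtain ⟨t, ht⟩ := evaln_complete.1 hmem
      have : diagB s.unpair.1 L (Nat.pair k t) = true := by
        rw [diagB_iff]
        have hu1 : (Nat.pair k t).unpair.1 = k := by simp
        have hu2 : (Nat.pair k t).unpair.2 = t := by simp
        have hwof : wOf s.unpair.1 (Nat.pair k t) = h k := by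
          rw [wOf, hu1, hu2, hon]
          rw [Option.mem_def] at ht
          rw [ht]
          rfl
        refine ⟨by rw [hu1]; exact hkL, ?_, by rw [hwof, hu1]; exact hk⟩
        rw [hu1, hu2, hon, hwof]
        exact ht
      rw [trueFind_none htf] at this
      cases this

theorem DD_unbounded_col (e N : ℕ) : ∃ k, N ≤ k ∧ k ∈ DD ∧ k.unpair.1 = e := by
  refine ⟨posT trueFind (Nat.pair e N), ?_, posT_mem_DD _, by simp [posT]⟩
  exact le_trans (Nat.right_le_pair e N) (posT_ge trueFind _)

theorem DD_col_infinite (e : ℕ) : {k | k ∈ DD ∧ k.unpair.1 = e}.Infinite := by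
  rw [Set.infinite_coe_iff.symm, Set.infinite_coe_iff]
  apply Set.infinite_of_not_bddAbove
  rintro ⟨b, hb⟩
  obtain ⟨k, hk1, hk2, hk3⟩ := DD_unbounded_col e (b + 1)
  exact absurd (hb ⟨hk2, hk3⟩) (by omega)

theorem DD_infinite : DD.Infinite :=
  (DD_col_infinite 0).mono (Set.sep_subset _ _)

theorem DD_compl_unbounded (N : ℕ) : ∃ k, N ≤ k ∧ k ∉ DD := by
  refine ⟨posT trueFind N + 1, ?_, posT_succ_not_mem_DD N⟩
  have := posT_ge trueFind N
  omega

theorem DD_not_computable : ¬ ComputablePred (· ∈ DD) := by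
  intro hcp
  obtain ⟨χ, hχ, hiff⟩ := ComputablePred.computable_iff.1 hcp
  have hiff' : ∀ x, x ∈ DD ↔ χ x = true := fun x => iff_of_eq (congrFun hiff x)
  set p : ℕ → ℕ → Bool := fun n m => χ (n + 1 + m) == χ n with hp
  have hptot : ∀ n, ∃ m, p n m = true := by
    intro n
    by_cases hn : χ n = true
    · obtain ⟨k, hk1, hk2, -⟩ := DD_unbounded_col 0 (n + 1)
      refine ⟨k - (n + 1), ?_⟩
      have hkk : n + 1 + (k - (n + 1)) = k := by omega
      simp only [hp, hkk, beq_iff_eq, hn]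
      exact (hiff' k).1 hk2
    · obtain ⟨k, hk1, hk2⟩ := DD_compl_unbounded (n + 1)
      refine ⟨k - (n + 1), ?_⟩
      have hkk : n + 1 + (k - (n + 1)) = k := by omega
      simp only [hp, hkk, beq_iff_eq]
      have h1 : ¬ χ k = true := fun hc => hk2 ((hiff' k).2 hc)
      simp only [Bool.not_eq_true] at h1 hn
      rw [h1, hn]
  -- turn the least witness search into a computable total function
  set q : ℕ → ℕ →. Bool := fun n m => Part.some (p n m) with hq
  have harith : Primrec fun pr : ℕ × ℕ => pr.1 + 1 + pr.2 :=
    Primrec.nat_add.comp (Primrec.nat_add.comp Primrec.fst (Primrec.const 1)) Primrec.snd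
  have hp2 : Computable₂ p :=
    (Primrec.beq.to_comp).comp (hχ.comp harith.to_comp) (hχ.comp Computable.fst)
  have hqp : Partrec₂ q := hp2.partrec₂
  have hdom : ∀ n, (Nat.rfind (q n)).Dom := by
    intro n
    rw [Nat.rfind_dom]
    obtain ⟨m, hm⟩ := hptot n
    exact ⟨m, by simp [hq, hm], fun {k} _ => trivial⟩
  set g : ℕ → ℕ := fun n => (Nat.rfind (q n)).get (hdom n) with hg
  have hgc : Computable g := by
    refine Partrec.of_eq_tot (Partrec.rfind hqp) (fun n => ?_)
    exact Part.get_mem (hdom n)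
  have hgspec : ∀ n, p n (g n) = true := by
    intro n
    have := Nat.rfind_spec (Part.get_mem (hdom n))
    simpa [hq] using this
  set h : ℕ → ℕ := fun n => n + 1 + g n with hh
  have hhc : Computable h :=
    (Primrec.nat_add.to_comp).comp (Primrec.succ.to_comp) hgc
  have hmemiff : ∀ k, (h k ∈ DD ↔ k ∈ DD) := by
    intro k
    have := hgspec k
    simp only [hp, beq_iff_eq] at this
    rw [hiff' (h k), hiff' k]
    simp only [hh]
    rw [this]
  have hfin := DD_key hhc hmemiff
  have : {k | k ∈ DD ∧ h k ≠ k} = DD := by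
    ext k
    simp only [Set.mem_setOf_eq, hh, and_iff_left_iff_imp]
    intro _
    omega
  rw [this] at hfin
  exact DD_infinite hfin

theorem run_agree (s : ℕ) : ∃ b₀, ∀ b, b₀ ≤ b → run (apxFind b) s = run trueFind s := by
  induction s with
  | zero => exact ⟨0, fun _ _ => rfl⟩
  | succ s ih =>
      obtain ⟨b₀, hb₀⟩ := ih
      obtain ⟨b₁, hb₁⟩ := apxFind_agree s.unpair.1 (ext2 s (run trueFind s)).length
      refine ⟨max b₀ b₁, fun b hb => ?_⟩
      show stepF (apxFind b) s (run (apxFind b) s) = stepF trueFind s (run trueFind s)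
      rw [hb₀ b (le_trans (le_max_left _ _) hb)]
      unfold stepF
      rw [hb₁ b (le_trans (le_max_right _ _) hb)]

/-! ### Computability of the approximation -/

theorem wOf_primrec : Primrec₂ wOf := by
  have h1 : Primrec fun a : ℕ × ℕ => ((a.2.unpair.2, Denumerable.ofNat Code a.1), a.2.unpair.1) :=
    ((Primrec.snd.comp (Primrec.unpair.comp Primrec.snd)).pair
      ((Primrec.ofNat Code).comp Primrec.fst)).pair
      (Primrec.fst.comp (Primrec.unpair.comp Primrec.snd))
  have h2 : Primrec fun a : ℕ × ℕ =>
      evaln a.2.unpair.2 (Denumerable.ofNat Code a.1) a.2.unpair.1 := primrec_evaln.comp h1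
  exact Primrec.option_getD.comp h2 (Primrec.fst.comp (Primrec.unpair.comp Primrec.snd))

theorem diagB_primrec : Primrec fun a : ℕ × ℕ × ℕ => diagB a.1 a.2.1 a.2.2 := by
  have hk : Primrec fun a : ℕ × ℕ × ℕ => a.2.2.unpair.1 :=
    Primrec.fst.comp (Primrec.unpair.comp (Primrec.snd.comp Primrec.snd))
  have h1 : Primrec fun a : ℕ × ℕ × ℕ => decide (a.2.1 ≤ a.2.2.unpair.1) :=
    (Primrec.nat_le.comp (Primrec.fst.comp Primrec.snd) hk).decide
  have hw : Primrec fun a : ℕ × ℕ × ℕ => wOf a.1 a.2.2 :=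
    wOf_primrec.comp Primrec.fst (Primrec.snd.comp Primrec.snd)
  have h2 : Primrec fun a : ℕ × ℕ × ℕ => decide (wOf a.1 a.2.2 ≠ a.2.2.unpair.1) :=
    (Primrec.eq.comp hw hk).not.decide
  exact Primrec.and.comp h1 h2

theorem apxFind_primrec : Primrec fun a : ℕ × ℕ × ℕ => apxFind a.1 a.2.1 a.2.2 := by
  have hstep : Primrec₂ fun (a : ℕ × ℕ) (mih : ℕ × Option ℕ) =>
      mih.2 <|> (if diagB a.1 a.2 mih.1 then some mih.1 else none) := by
    refine Primrec.option_orElse.comp (Primrec.snd.comp Primrec.snd) ?_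
    have hd : Primrec fun p : (ℕ × ℕ) × ℕ × Option ℕ => diagB p.1.1 p.1.2 p.2.1 :=
      diagB_primrec.comp ((Primrec.fst.comp Primrec.fst).pair
        ((Primrec.snd.comp Primrec.fst).pair (Primrec.fst.comp Primrec.snd)))
    exact (Primrec.ite (Primrec.eq.comp hd (Primrec.const true))
      (Primrec.option_some.comp (Primrec.fst.comp Primrec.snd)) (Primrec.const none)).of_eq
      (fun p => by cases h : diagB p.1.1 p.1.2 p.2.1 <;> simp [h])
  have := Primrec.nat_rec (f := fun _ : ℕ × ℕ => (none : Option ℕ)) (Primrec.const none) hstep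
  exact (this.comp (Primrec.snd) (Primrec.fst)).of_eq fun a => by
    simp [apxFind]

theorem replicate_primrec : Primrec fun n => List.replicate n (false : Bool) := by
  have h : Primrec₂ fun (_ : ℕ) (ih : List Bool) => (false : Bool) :: ih :=
    Primrec.list_cons.comp (Primrec.const false) Primrec.snd |>.to₂
  exact (Primrec.nat_rec₁ ([] : List Bool) h).of_eq fun n => by
    induction n with
    | zero => rfl
    | succ n ih => simpa [List.replicate_succ] using ih

theorem ext2_primrec : Primrec₂ ext2 := by
  have hlen : Primrec fun a : ℕ × List Bool => a.2.length :=
    Primrec.list_length.comp Primrec.snd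
  have hx : Primrec fun a : ℕ × List Bool => Nat.pair a.1.unpair.1 a.2.length :=
    Primrec₂.natPair.comp (Primrec.fst.comp (Primrec.unpair.comp Primrec.fst)) hlen
  have hrep : Primrec fun a : ℕ × List Bool =>
      List.replicate (Nat.pair a.1.unpair.1 a.2.length - a.2.length) (false : Bool) :=
    replicate_primrec.comp (Primrec.nat_sub.comp hx hlen)
  have hext1 : Primrec fun a : ℕ × List Bool => ext1 a.1 a.2 := by
    refine (Primrec.list_append.comp Primrec.snd
      (Primrec.list_append.comp hrep (Primrec.const ([true] ++ List.replicate 0 false)))).of_eq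
      fun a => by simp [ext1]
  exact (Primrec.list_append.comp hext1
    (Primrec.const (List.replicate 0 false ++ ([false] ++ List.replicate 0 false)))).of_eq
    fun a => by simp [ext2]

theorem stepF_apx_primrec :
    Primrec fun a : ℕ × ℕ × List Bool => stepF (apxFind a.1) a.2.1 a.2.2 := by
  have he2 : Primrec fun a : ℕ × ℕ × List Bool => ext2 a.2.1 a.2.2 :=
    ext2_primrec.comp (Primrec.fst.comp Primrec.snd) (Primrec.snd.comp Primrec.snd)
  have hF : Primrec fun a : ℕ × ℕ × List Bool =>
      apxFind a.1 a.2.1.unpair.1 (ext2 a.2.1 a.2.2).length :=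
    apxFind_primrec.comp (Primrec.fst.pair
      (((Primrec.fst.comp (Primrec.unpair.comp (Primrec.fst.comp Primrec.snd)))).pair
        (Primrec.list_length.comp he2)))
  -- the some-branch as a function of ((a, n) : (ℕ × ℕ × List Bool) × ℕ)
  have hsome : Primrec₂ fun (a : ℕ × ℕ × List Bool) (n : ℕ) =>
      ext2 a.2.1 a.2.2 ++ (List.replicate (n.unpair.1 - (ext2 a.2.1 a.2.2).length) false ++
        ([!val (ext2 a.2.1 a.2.2) (wOf a.2.1.unpair.1 n)] ++
          List.replicate (max n.unpair.1 (wOf a.2.1.unpair.1 n) - n.unpair.1) false)) := by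
    have he2' : Primrec fun p : (ℕ × ℕ × List Bool) × ℕ => ext2 p.1.2.1 p.1.2.2 :=
      he2.comp Primrec.fst
    have hk : Primrec fun p : (ℕ × ℕ × List Bool) × ℕ => p.2.unpair.1 :=
      Primrec.fst.comp (Primrec.unpair.comp Primrec.snd)
    have hw : Primrec fun p : (ℕ × ℕ × List Bool) × ℕ => wOf p.1.2.1.unpair.1 p.2 :=
      wOf_primrec.comp
        (Primrec.fst.comp (Primrec.unpair.comp (Primrec.fst.comp (Primrec.snd.comp Primrec.fst))))
        Primrec.snd
    have hrep1 : Primrec fun p : (ℕ × ℕ × List Bool) × ℕ =>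
        List.replicate (p.2.unpair.1 - (ext2 p.1.2.1 p.1.2.2).length) (false : Bool) :=
      replicate_primrec.comp (Primrec.nat_sub.comp hk (Primrec.list_length.comp he2'))
    have hval : Primrec fun p : (ℕ × ℕ × List Bool) × ℕ =>
        [!val (ext2 p.1.2.1 p.1.2.2) (wOf p.1.2.1.unpair.1 p.2)] := by
      have : Primrec fun p : (ℕ × ℕ × List Bool) × ℕ =>
          val (ext2 p.1.2.1 p.1.2.2) (wOf p.1.2.1.unpair.1 p.2) :=
        (Primrec.list_getD false).comp he2' hw
      exact Primrec.list_cons.comp (Primrec.not.comp this) (Primrec.const [])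
    have hrep2 : Primrec fun p : (ℕ × ℕ × List Bool) × ℕ =>
        List.replicate (max p.2.unpair.1 (wOf p.1.2.1.unpair.1 p.2) - p.2.unpair.1)
          (false : Bool) :=
      replicate_primrec.comp (Primrec.nat_sub.comp (Primrec.nat_max.comp hk hw) hk)
    exact (Primrec.list_append.comp he2'
      (Primrec.list_append.comp hrep1 (Primrec.list_append.comp hval hrep2))).to₂
  refine (Primrec.option_casesOn hF he2 hsome).of_eq fun a => ?_
  unfold stepF
  cases apxFind a.1 a.2.1.unpair.1 (ext2 a.2.1 a.2.2).length <;> rfl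

theorem run_apx_primrec : Primrec₂ fun b s => run (apxFind b) s := by
  have h := Primrec.nat_rec (f := fun _ : ℕ => ([] : List Bool)) (Primrec.const [])
    (stepF_apx_primrec.comp
      (Primrec.fst.pair ((Primrec.fst.comp Primrec.snd).pair
        (Primrec.snd.comp Primrec.snd)))).to₂
  refine h.of_eq fun b s => ?_
  induction s with
  | zero => rfl
  | succ s ih => simp [run, ih]

theorem DD_limit : LimitComputable DD := by
  refine ⟨fun b n => val (run (apxFind b) (n + 1)) n, ?_, ?_⟩
  · have : Primrec₂ fun b n => val (run (apxFind b) (n + 1)) n :=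
      ((Primrec.list_getD false).comp
        (run_apx_primrec.comp Primrec.fst (Primrec.succ.comp Primrec.snd)) Primrec.snd).to₂
    exact this.to_comp
  · intro n
    obtain ⟨b₀, hb₀⟩ := run_agree (n + 1)
    refine ⟨b₀, fun s hs => ?_⟩
    show val (run (apxFind s) (n + 1)) n = true ↔ n ∈ DD
    rw [hb₀ s hs]
    exact Iff.rfl

/-! ### Padded block sets over `DD` -/

def SizeOK (β : ℕ → ℕ) : Prop := ∀ k, 1 ≤ β k ∧ β k ≤ 2

def Blk (β : ℕ → ℕ) : Set ℕ := {x | x.unpair.2 < β x.unpair.1 ∧ x.unpair.1 ∈ DD}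

def Aset : Set ℕ := Blk fun _ => 1

theorem encard_le_two_of_subset_pair {S : Set ℕ} {a b : ℕ} (h : S ⊆ {a, b}) :
    S.encard ≤ ((2 : ℕ) : ℕ∞) := by
  refine le_trans (Set.encard_mono h) ?_
  refine le_trans (Set.encard_insert_le _ _) ?_
  rw [Set.encard_singleton]
  norm_num

theorem mem_Blk_iff {β : ℕ → ℕ} {k i : ℕ} :
    Nat.pair k i ∈ Blk β ↔ (i < β k ∧ k ∈ DD) := by
  simp [Blk]

theorem blk_bfo_A {β : ℕ → ℕ} (hβ : SizeOK β) (hc : Computable β) :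
    BfoRed (Blk β) Aset := by
  classical
  refine ⟨fun x => if x.unpair.2 < β x.unpair.1 then Nat.pair x.unpair.1 0 else x, ?_, ?_, ?_⟩
  · have hcond : Computable fun x : ℕ => decide (x.unpair.2 < β x.unpair.1) :=
      (Primrec.nat_lt.decide.to_comp).comp
        ((Primrec.snd.comp Primrec.unpair).to_comp)
        (hc.comp ((Primrec.fst.comp Primrec.unpair).to_comp))
    have hthen : Computable fun x : ℕ => Nat.pair x.unpair.1 0 :=
      (Primrec₂.natPair.comp (Primrec.fst.comp Primrec.unpair) (Primrec.const 0)).to_comp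
    exact (Computable.cond hcond hthen Computable.id).of_eq fun x => by
      by_cases h : x.unpair.2 < β x.unpair.1 <;> simp [h]
  · refine ⟨2, one_le_two, fun y => ?_⟩
    refine encard_le_two_of_subset_pair (a := y) (b := Nat.pair y.unpair.1 1) ?_
    intro x hx
    simp only [Set.mem_setOf_eq] at hx
    simp only [Set.mem_insert_iff, Set.mem_singleton_iff]
    by_cases h : x.unpair.2 < β x.unpair.1
    · rw [if_pos h] at hx
      have hk : y.unpair.1 = x.unpair.1 := by rw [← hx]; simp
      have hb := (hβ x.unpair.1).2
      have hx2 : x.unpair.2 = 0 ∨ x.unpair.2 = 1 := by omega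
      rcases hx2 with h0 | h1
      · left
        rw [← hx, ← h0, Nat.pair_unpair]
      · right
        rw [hk, ← h1, Nat.pair_unpair]
    · rw [if_neg h] at hx
      exact Or.inl hx
  · intro x
    simp only []
    by_cases h : x.unpair.2 < β x.unpair.1
    · rw [if_pos h]
      have h1 : x = Nat.pair x.unpair.1 x.unpair.2 := (Nat.pair_unpair x).symm
      rw [Aset]
      constructor
      · intro hx
        exact mem_Blk_iff.2 ⟨Nat.one_pos, ((h1 ▸ hx : Nat.pair x.unpair.1 x.unpair.2 ∈ Blk β) |> mem_Blk_iff.1).2⟩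
      · intro hx
        rw [h1]
        exact mem_Blk_iff.2 ⟨h, (mem_Blk_iff.1 hx).2⟩
    · rw [if_neg h]
      constructor
      · intro hx
        exact absurd (hx.1) h
      · intro hx
        have h1 : x.unpair.2 < 1 := hx.1
        have h2 : (1 : ℕ) ≤ β x.unpair.1 := (hβ _).1
        exact absurd (by omega : x.unpair.2 < β x.unpair.1) h
theorem A_bfo_blk {β : ℕ → ℕ} (hβ : SizeOK β) :
    BfoRed Aset (Blk β) := by
  classical
  refine ⟨fun x => if x.unpair.2 = 0 then x else Nat.pair x.unpair.1 (max x.unpair.2 2),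
    ?_, ?_, ?_⟩
  · have hcond : Computable fun x : ℕ => decide (x.unpair.2 = 0) :=
      (Primrec.eq.comp (Primrec.snd.comp Primrec.unpair) (Primrec.const 0)).decide.to_comp
    have helse : Computable fun x : ℕ => Nat.pair x.unpair.1 (max x.unpair.2 2) :=
      (Primrec₂.natPair.comp (Primrec.fst.comp Primrec.unpair)
        (Primrec.nat_max.comp (Primrec.snd.comp Primrec.unpair) (Primrec.const 2))).to_comp
    exact (Computable.cond hcond Computable.id helse).of_eq fun x => by
      by_cases h : x.unpair.2 = 0 <;> simp [h]
  · refine ⟨2, one_le_two, fun y => ?_⟩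
    refine encard_le_two_of_subset_pair (a := y) (b := Nat.pair y.unpair.1 1) ?_
    intro x hx
    simp only [Set.mem_setOf_eq] at hx
    simp only [Set.mem_insert_iff, Set.mem_singleton_iff]
    by_cases h : x.unpair.2 = 0
    · rw [if_pos h] at hx
      exact Or.inl hx
    · rw [if_neg h] at hx
      by_cases h2 : x.unpair.2 = 1
      · right
        have hk : y.unpair.1 = x.unpair.1 := by rw [← hx]; simp
        rw [hk, ← h2, Nat.pair_unpair]
      · left
        have hmax : max x.unpair.2 2 = x.unpair.2 := by omega
        rw [← hx, hmax, Nat.pair_unpair]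
  · intro x
    simp only []
    by_cases h : x.unpair.2 = 0
    · rw [if_pos h]
      constructor
      · intro hx
        have h1 : x = Nat.pair x.unpair.1 x.unpair.2 := (Nat.pair_unpair x).symm
        have hD : x.unpair.1 ∈ DD := hx.2
        exact ⟨by rw [h]; exact (hβ _).1, hD⟩
      · intro hx
        exact ⟨by rw [h]; exact Nat.one_pos, hx.2⟩
    · rw [if_neg h]
      constructor
      · intro hx
        have h1 : x.unpair.2 < 1 := hx.1
        exact absurd (by omega : x.unpair.2 = 0) h
      · intro hx
        have h1 := (mem_Blk_iff.1 hx).1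
        have h2 := (hβ x.unpair.1).2
        omega

theorem blk_bfoEquiv {β : ℕ → ℕ} (hβ : SizeOK β) (hc : Computable β) :
    BfoEquiv (Blk β) Aset :=
  ⟨blk_bfo_A hβ hc, A_bfo_blk hβ⟩
theorem blk_oneOneRed {β γ : ℕ → ℕ} (hcβ : Computable β) (hcγ : Computable γ)
    (hle : ∀ k, β k ≤ γ k) : OneOneRed (Blk β) (Blk γ) := by
  classical
  refine ⟨fun x => if x.unpair.2 < β x.unpair.1 then x
    else Nat.pair x.unpair.1 (x.unpair.2 + (γ x.unpair.1 - β x.unpair.1)), ?_, ?_, ?_⟩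
  · have hcond : Computable fun x : ℕ => decide (x.unpair.2 < β x.unpair.1) :=
      (Primrec.nat_lt.decide.to_comp).comp
        ((Primrec.snd.comp Primrec.unpair).to_comp)
        (hcβ.comp ((Primrec.fst.comp Primrec.unpair).to_comp))
    have helse : Computable fun x : ℕ =>
        Nat.pair x.unpair.1 (x.unpair.2 + (γ x.unpair.1 - β x.unpair.1)) := by
      have hfstu : Computable fun x : ℕ => x.unpair.1 :=
        (Primrec.fst.comp Primrec.unpair).to_comp
      have hsndu : Computable fun x : ℕ => x.unpair.2 :=
        (Primrec.snd.comp Primrec.unpair).to_comp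
      have hdiff : Computable fun x : ℕ => γ x.unpair.1 - β x.unpair.1 :=
        (Primrec.nat_sub.to_comp).comp (hcγ.comp hfstu) (hcβ.comp hfstu)
      exact (Primrec₂.natPair.to_comp).comp hfstu ((Primrec.nat_add.to_comp).comp hsndu hdiff)
    exact (Computable.cond hcond Computable.id helse).of_eq fun x => by
      by_cases h : x.unpair.2 < β x.unpair.1 <;> simp [h]
  · intro x y hxy
    simp only [] at hxy
    have hkx : ∀ z : ℕ, ((if z.unpair.2 < β z.unpair.1 then z
        else Nat.pair z.unpair.1 (z.unpair.2 + (γ z.unpair.1 - β z.unpair.1)))).unpair.1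
        = z.unpair.1 := by
      intro z
      by_cases h : z.unpair.2 < β z.unpair.1 <;> simp [h]
    have hk : x.unpair.1 = y.unpair.1 := by
      have := congrArg (fun t => t.unpair.1) hxy
      simpa [hkx x, hkx y] using this
    have hoff : ∀ z : ℕ, ((if z.unpair.2 < β z.unpair.1 then z
        else Nat.pair z.unpair.1 (z.unpair.2 + (γ z.unpair.1 - β z.unpair.1)))).unpair.2
        = (if z.unpair.2 < β z.unpair.1 then z.unpair.2
          else z.unpair.2 + (γ z.unpair.1 - β z.unpair.1)) := by
      intro z
      by_cases h : z.unpair.2 < β z.unpair.1 <;> simp [h]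
    have ho : (if x.unpair.2 < β x.unpair.1 then x.unpair.2
          else x.unpair.2 + (γ x.unpair.1 - β x.unpair.1))
        = (if y.unpair.2 < β y.unpair.1 then y.unpair.2
          else y.unpair.2 + (γ y.unpair.1 - β y.unpair.1)) := by
      have := congrArg (fun t => t.unpair.2) hxy
      simpa [hoff x, hoff y] using this
    have hxy2 : x.unpair.2 = y.unpair.2 := by
      rw [hk] at ho
      have hbg := hle y.unpair.1
      by_cases h1 : x.unpair.2 < β y.unpair.1 <;> by_cases h2 : y.unpair.2 < β y.unpair.1 <;>
        simp [h1, h2] at ho <;> omega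
    have := Nat.pair_unpair x
    rw [hxy2, hk] at this
    rw [← this, Nat.pair_unpair y]
  · intro x
    simp only []
    by_cases h : x.unpair.2 < β x.unpair.1
    · rw [if_pos h]
      have h2 : x.unpair.2 < γ x.unpair.1 := lt_of_lt_of_le h (hle _)
      constructor
      · intro hx
        exact ⟨h2, hx.2⟩
      · intro hx
        exact ⟨h, hx.2⟩
    · rw [if_neg h]
      constructor
      · intro hx
        exact absurd hx.1 h
      · intro hx
        have h1 := (mem_Blk_iff.1 hx).1
        have hbg := hle x.unpair.1
        omega

theorem blk_not_oneOneRed {β γ : ℕ → ℕ} (hβ : SizeOK β) (hγ : SizeOK γ)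
    (hcβ : Computable β) (hcγ : Computable γ)
    (hinf : {k | k ∈ DD ∧ γ k < β k}.Infinite) : ¬ OneOneRed (Blk β) (Blk γ) := by
  classical
  rintro ⟨f, hf, hinj, hmem⟩
  set good : ℕ → ℕ → Bool := fun k y =>
    decide (y.unpair.2 < γ y.unpair.1) && decide (y.unpair.1 ≠ k) with hgood
  set h : ℕ → ℕ := fun k =>
    cond (good k (f (Nat.pair k 0))) (f (Nat.pair k 0)).unpair.1
      (cond (decide (1 < β k) && good k (f (Nat.pair k 1))) (f (Nat.pair k 1)).unpair.1 k)
    with hh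
  have hgc : Computable₂ good := by
    have h1 : Computable fun p : ℕ × ℕ => decide (p.2.unpair.2 < γ p.2.unpair.1) :=
      (Primrec.nat_lt.decide.to_comp).comp
        ((Primrec.snd.comp (Primrec.unpair.comp Primrec.snd)).to_comp)
        (hcγ.comp ((Primrec.fst.comp (Primrec.unpair.comp Primrec.snd)).to_comp))
    have h2 : Computable fun p : ℕ × ℕ => decide (p.2.unpair.1 ≠ p.1) :=
      ((Primrec.eq.comp (Primrec.fst.comp (Primrec.unpair.comp Primrec.snd))
        Primrec.fst).not).decide.to_comp
    exact (Primrec.and.to_comp).comp h1 h2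
  have hhc : Computable h := by
    have hf0 : Computable fun k => f (Nat.pair k 0) :=
      hf.comp ((Primrec₂.natPair.comp Primrec.id (Primrec.const 0)).to_comp)
    have hf1 : Computable fun k => f (Nat.pair k 1) :=
      hf.comp ((Primrec₂.natPair.comp Primrec.id (Primrec.const 1)).to_comp)
    have hg0 : Computable fun k => good k (f (Nat.pair k 0)) :=
      hgc.comp Computable.id hf0
    have hg1 : Computable fun k => good k (f (Nat.pair k 1)) :=
      hgc.comp Computable.id hf1
    have hu0 : Computable fun k => (f (Nat.pair k 0)).unpair.1 :=
      ((Primrec.fst.comp Primrec.unpair).to_comp).comp hf0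
    have hu1 : Computable fun k => (f (Nat.pair k 1)).unpair.1 :=
      ((Primrec.fst.comp Primrec.unpair).to_comp).comp hf1
    have hb : Computable fun k => decide (1 < β k) :=
      (Primrec.nat_lt.decide.to_comp).comp (Computable.const 1) hcβ
    have hcond2 : Computable fun k => (decide (1 < β k) && good k (f (Nat.pair k 1))) :=
      (Primrec.and.to_comp).comp hb hg1
    exact Computable.cond hg0 hu0 (Computable.cond hcond2 hu1 Computable.id)
  -- h preserves DD-membership
  have hpres : ∀ k, (h k ∈ DD ↔ k ∈ DD) := by
    intro k
    have key : ∀ i, i < β k → good k (f (Nat.pair k i)) = true →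
        ((f (Nat.pair k i)).unpair.1 ∈ DD ↔ k ∈ DD) := by
      intro i hi hg
      simp only [hgood, Bool.and_eq_true, decide_eq_true_eq] at hg
      have hsrc : Nat.pair k i ∈ Blk β ↔ k ∈ DD := by
        rw [mem_Blk_iff]
        exact ⟨fun a => a.2, fun a => ⟨hi, a⟩⟩
      have himg : f (Nat.pair k i) ∈ Blk γ ↔ (f (Nat.pair k i)).unpair.1 ∈ DD := by
        constructor
        · intro a
          exact a.2
        · intro a
          exact ⟨hg.1, a⟩
      rw [← himg, ← hmem, hsrc]
    simp only [hh]
    cases hg0 : good k (f (Nat.pair k 0)) with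
    | true =>
        simp only [cond_true]
        exact key 0 (hβ k).1 hg0
    | false =>
        simp only [cond_false]
        cases hcond : (decide (1 < β k) && good k (f (Nat.pair k 1))) with
        | true =>
            simp only [cond_true]
            simp only [Bool.and_eq_true, decide_eq_true_eq] at hcond
            exact key 1 hcond.1 hcond.2
        | false => simp only [cond_false]
  -- h moves every k ∈ DD with γ k < β k
  have hmove : ∀ k, k ∈ DD → γ k < β k → h k ≠ k := by
    intro k hkD hlt
    have hβk : β k = 2 := by have := hβ k; have := hγ k; omega
    have hγk : γ k = 1 := by have := hβ k; have := hγ k; omega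
    have hsrc : ∀ i, i < 2 → f (Nat.pair k i) ∈ Blk γ := by
      intro i hi
      rw [← hmem, mem_Blk_iff]
      exact ⟨by omega, hkD⟩
    have hoff : ∀ i, i < 2 → (f (Nat.pair k i)).unpair.2 < γ ((f (Nat.pair k i)).unpair.1) :=
      fun i hi => (hsrc i hi).1
    by_cases h0 : (f (Nat.pair k 0)).unpair.1 = k
    · -- then f (pair k 0) = pair k 0, so f (pair k 1) must leave the column
      have he0 : f (Nat.pair k 0) = Nat.pair k 0 := by
        have h1 := hoff 0 (by omega)
        rw [h0, hγk] at h1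
        have := Nat.pair_unpair (f (Nat.pair k 0))
        rw [← this, h0]
        congr 1
        omega
      have h1 : (f (Nat.pair k 1)).unpair.1 ≠ k := by
        intro hc
        have he1 : f (Nat.pair k 1) = Nat.pair k 0 := by
          have h1 := hoff 1 (by omega)
          rw [hc, hγk] at h1
          have := Nat.pair_unpair (f (Nat.pair k 1))
          rw [← this, hc]
          congr 1
          omega
        have := hinj (he0.trans he1.symm)
        have := congrArg (fun t => t.unpair.2) this
        simpa using this
      have hg0 : good k (f (Nat.pair k 0)) = false := by
        simp [hgood, h0]
      have hg1 : (decide (1 < β k) && good k (f (Nat.pair k 1))) = true := by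
        have := hoff 1 (by omega)
        simp [hgood, hβk, h1, this]
      simp only [hh, hg0, cond_false, hg1, cond_true]
      exact h1
    · have hg0 : good k (f (Nat.pair k 0)) = true := by
        have := hoff 0 (by omega)
        simp [hgood, h0, this]
      simp only [hh, hg0, cond_true]
      exact h0
  have hfin := DD_key hhc hpres
  refine hinf ?_
  refine Set.Finite.subset hfin ?_
  rintro k ⟨hk1, hk2⟩
  exact ⟨hk1, hmove k hk1 hk2⟩
/-! ### Size functions -/

def tsize (n : ℕ) (k : ℕ) : ℕ := if k.unpair.1 = n then 2 else 1

def bsize (q : ℚ) (k : ℕ) : ℕ :=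
  if k.unpair.1.unpair.1 * (q - 1).den <
      (q - 1).num.toNat * (k.unpair.1.unpair.1 + k.unpair.1.unpair.2 + 1) then 2 else 1

theorem tsize_ok (n : ℕ) : SizeOK (tsize n) := by
  intro k
  unfold tsize
  split_ifs <;> omega

theorem bsize_ok (q : ℚ) : SizeOK (bsize q) := by
  intro k
  unfold bsize
  split_ifs <;> omega

theorem tsize_computable (n : ℕ) : Computable (tsize n) := by
  have : Primrec (tsize n) := by
    unfold tsize
    exact Primrec.ite (Primrec.eq.comp (Primrec.fst.comp Primrec.unpair) (Primrec.const n))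
      (Primrec.const 2) (Primrec.const 1)
  exact this.to_comp

theorem bsize_computable (q : ℚ) : Computable (bsize q) := by
  have ha : Primrec fun k : ℕ => k.unpair.1.unpair.1 :=
    Primrec.fst.comp (Primrec.unpair.comp (Primrec.fst.comp Primrec.unpair))
  have hb : Primrec fun k : ℕ => k.unpair.1.unpair.2 :=
    Primrec.snd.comp (Primrec.unpair.comp (Primrec.fst.comp Primrec.unpair))
  have h1 : Primrec fun k : ℕ => k.unpair.1.unpair.1 * (q - 1).den :=
    Primrec.nat_mul.comp ha (Primrec.const _)
  have h2 : Primrec fun k : ℕ =>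
      (q - 1).num.toNat * (k.unpair.1.unpair.1 + k.unpair.1.unpair.2 + 1) :=
    Primrec.nat_mul.comp (Primrec.const _)
      (Primrec.nat_add.comp (Primrec.nat_add.comp ha hb) (Primrec.const 1))
  have : Primrec (bsize q) := by
    unfold bsize
    exact Primrec.ite (Primrec.nat_lt.comp h1 h2) (Primrec.const 2) (Primrec.const 1)
  exact this.to_comp

/-- The rational `a/(a+b+1)` associated to a column index. -/
noncomputable def ratOf (e : ℕ) : ℚ := (e.unpair.1 : ℚ) / (e.unpair.1 + e.unpair.2 + 1)

theorem bsize_cond_iff {q : ℚ} (hq : q ∈ Set.Ioo (1 : ℚ) 2) (k : ℕ) :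
    (k.unpair.1.unpair.1 * (q - 1).den <
      (q - 1).num.toNat * (k.unpair.1.unpair.1 + k.unpair.1.unpair.2 + 1))
      ↔ ratOf k.unpair.1 < q - 1 := by
  obtain ⟨hq1, hq2⟩ := hq
  set r := q - 1 with hr
  have hr0 : 0 < r := by rw [hr]; linarith
  have hnum : 0 < r.num := Rat.num_pos.2 hr0
  set a := k.unpair.1.unpair.1
  set b := k.unpair.1.unpair.2
  have hden : (0 : ℚ) < ((a : ℚ) + b + 1) := by positivity
  have hrden : (0 : ℚ) < (r.den : ℚ) := by
    have := r.pos
    exact_mod_cast this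
  rw [ratOf]
  show (a * r.den < r.num.toNat * (a + b + 1)) ↔ (a : ℚ) / ((a : ℚ) + (b : ℚ) + 1) < r
  rw [div_lt_iff₀ hden]
  have hnd : (r.num : ℚ) = r * (r.den : ℚ) :=
    (div_eq_iff (ne_of_gt hrden)).1 (Rat.num_div_den r)
  have htn : ((r.num.toNat : ℕ) : ℚ) = (r.num : ℚ) := by
    exact_mod_cast Int.toNat_of_nonneg hnum.le
  constructor
  · intro h
    have h2 : (a : ℚ) * r.den < (r.num.toNat : ℚ) * ((a : ℚ) + (b : ℚ) + 1) := by
      exact_mod_cast h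
    rw [htn, hnd,
      show r * (r.den : ℚ) * ((a : ℚ) + (b : ℚ) + 1)
        = (r * ((a : ℚ) + (b : ℚ) + 1)) * r.den by ring] at h2
    exact lt_of_mul_lt_mul_right h2 hrden.le
  · intro h
    have h2 : (a : ℚ) * r.den < (r * ((a : ℚ) + (b : ℚ) + 1)) * r.den :=
      mul_lt_mul_of_pos_right h hrden
    rw [show (r * ((a : ℚ) + (b : ℚ) + 1)) * r.den
        = (r * r.den) * ((a : ℚ) + (b : ℚ) + 1) by ring, ← hnd] at h2
    rw [← htn] at h2
    exact_mod_cast h2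
theorem bsize_mono {p q : ℚ} (hp : p ∈ Set.Ioo (1 : ℚ) 2) (hq : q ∈ Set.Ioo (1 : ℚ) 2)
    (hpq : p ≤ q) (k : ℕ) : bsize p k ≤ bsize q k := by
  by_cases hc : k.unpair.1.unpair.1 * (p - 1).den <
      (p - 1).num.toNat * (k.unpair.1.unpair.1 + k.unpair.1.unpair.2 + 1)
  · have h1 : ratOf k.unpair.1 < p - 1 := (bsize_cond_iff hp k).1 hc
    have h2 : ratOf k.unpair.1 < q - 1 := lt_of_lt_of_le h1 (by linarith)
    have hc2 := (bsize_cond_iff hq k).2 h2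
    unfold bsize
    rw [if_pos hc, if_pos hc2]
  · unfold bsize
    rw [if_neg hc]
    split_ifs <;> omega

theorem bsize_strict_infinite {p q : ℚ} (hp : p ∈ Set.Ioo (1 : ℚ) 2)
    (hq : q ∈ Set.Ioo (1 : ℚ) 2) (hpq : p < q) :
    {k | k ∈ DD ∧ bsize p k < bsize q k}.Infinite := by
  set r := p - 1 with hr
  have hr0 : 0 < r := by have := hp.1; rw [hr]; linarith
  have hr1 : r < 1 := by have := hp.2; rw [hr]; linarith
  have hnum : 0 < r.num := Rat.num_pos.2 hr0
  have hrden : (0 : ℚ) < (r.den : ℚ) := by exact_mod_cast r.pos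
  have hnd : (r.num : ℚ) = r * (r.den : ℚ) :=
    (div_eq_iff (ne_of_gt hrden)).1 (Rat.num_div_den r)
  have hless : r.num < (r.den : ℤ) := by
    have : (r.num : ℚ) < (r.den : ℚ) := by
      rw [hnd]
      nlinarith
    exact_mod_cast this
  have hlessN : r.num.toNat < r.den := by omega
  set e₀ := Nat.pair r.num.toNat (r.den - r.num.toNat - 1) with he₀
  refine Set.Infinite.mono ?_ (DD_col_infinite e₀)
  rintro k ⟨hk1, hk2⟩
  have ha : k.unpair.1.unpair.1 = r.num.toNat := by rw [hk2, he₀]; simp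
  have hb : k.unpair.1.unpair.2 = r.den - r.num.toNat - 1 := by rw [hk2, he₀]; simp
  have hsum : k.unpair.1.unpair.1 + k.unpair.1.unpair.2 + 1 = r.den := by
    rw [ha, hb]; omega
  have hrat : ratOf k.unpair.1 = r := by
    rw [ratOf]
    have h1 : ((k.unpair.1.unpair.1 : ℚ)) = ((r.num.toNat : ℕ) : ℚ) := by exact_mod_cast ha
    have h2 : ((k.unpair.1.unpair.1 : ℚ) + (k.unpair.1.unpair.2 : ℚ) + 1) = (r.den : ℚ) := by
      exact_mod_cast hsum
    rw [h2, h1]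
    have htn : ((r.num.toNat : ℕ) : ℚ) = (r.num : ℚ) := by
      exact_mod_cast Int.toNat_of_nonneg hnum.le
    rw [htn]
    exact Rat.num_div_den r
  refine ⟨hk1, ?_⟩
  have hcq : bsize q k = 2 := by
    have : ratOf k.unpair.1 < q - 1 := by rw [hrat, hr]; linarith
    unfold bsize
    rw [if_pos ((bsize_cond_iff hq k).2 this)]
  have hcp : bsize p k = 1 := by
    have : ¬ (ratOf k.unpair.1 < p - 1) := by rw [hrat, hr]; exact lt_irrefl r
    unfold bsize
    rw [if_neg (fun hc => this ((bsize_cond_iff hp k).1 hc))]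
  omega

theorem tsize_strict_infinite {n m : ℕ} (hnm : n ≠ m) :
    {k | k ∈ DD ∧ tsize m k < tsize n k}.Infinite := by
  refine Set.Infinite.mono ?_ (DD_col_infinite n)
  rintro k ⟨hk1, hk2⟩
  refine ⟨hk1, ?_⟩
  unfold tsize
  rw [if_pos hk2, if_neg (by rw [hk2]; exact hnm)]
  omega

theorem Aset_not_computable : ¬ ComputablePred (· ∈ Aset) := by
  intro h
  obtain ⟨χ, hχ, heq⟩ := ComputablePred.computable_iff.1 h
  have heq' : ∀ x, x ∈ Aset ↔ χ x = true := fun x => iff_of_eq (congrFun heq x)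
  refine DD_not_computable (ComputablePred.computable_iff.2
    ⟨fun k => χ (Nat.pair k 0),
      hχ.comp ((Primrec₂.natPair.comp Primrec.id (Primrec.const 0)).to_comp), ?_⟩)
  funext k
  have h1 : k ∈ DD ↔ Nat.pair k 0 ∈ Aset := by
    rw [Aset, mem_Blk_iff]
    exact ⟨fun a => ⟨Nat.one_pos, a⟩, fun a => a.2⟩
  simp only [eq_iff_iff]
  rw [h1, heq' (Nat.pair k 0)]

theorem Aset_limit : LimitComputable Aset := by
  obtain ⟨g, hgc, hconv⟩ := DD_limit
  refine ⟨fun s x => decide (x.unpair.2 = 0) && g s x.unpair.1, ?_, ?_⟩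
  · have c1 : Computable fun p : ℕ × ℕ => decide (p.2.unpair.2 = 0) :=
      ((Primrec.eq.comp (Primrec.snd.comp (Primrec.unpair.comp Primrec.snd))
        (Primrec.const 0))).decide.to_comp
    have c2 : Computable fun p : ℕ × ℕ => g p.1 p.2.unpair.1 :=
      hgc.comp Computable.fst ((Primrec.fst.comp (Primrec.unpair.comp Primrec.snd)).to_comp)
    exact (Primrec.and.to_comp).comp c1 c2
  · intro x
    by_cases h0 : x.unpair.2 = 0
    · obtain ⟨s₀, hs₀⟩ := hconv x.unpair.1
      refine ⟨s₀, fun s hs => ?_⟩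
      have hA : x ∈ Aset ↔ x.unpair.1 ∈ DD := by
        constructor
        · exact fun a => a.2
        · intro a
          exact ⟨by rw [h0]; exact Nat.one_pos, a⟩
      simp only [h0, decide_true, Bool.true_and]
      rw [hA]
      exact hs₀ s hs
    · refine ⟨0, fun s _ => ?_⟩
      simp only [h0, decide_false, Bool.false_and]
      constructor
      · intro hc
        exact absurd hc (by simp)
      · intro hc
        have : x.unpair.2 < 1 := hc.1
        omega

end DCon


/-- **One degree containing both structures.**  There exist a nonrecursive limit
computable set `A`, a family `{B_q}_{q ∈ ℚ ∩ (1,2)}`, and a family `{W_n}_{n ∈ ℕ}`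
such that: (i) `B_q ≡_bfo A` for all `q ∈ ℚ ∩ (1,2)`; (ii) `W_n ≡_bfo A` for all
`n`; (iii) `B_p <₁ B_q` whenever `p < q` in `ℚ ∩ (1,2)`; (iv) `¬ W_n ≤₁ W_m`
whenever `n ≠ m`.  So the bounded finite-one degree of `A` contains both a copy
of `(ℚ, ≤)` and an infinite antichain of 1-degrees. -/
theorem one_degree_both_structures :
    ∃ (A : Set ℕ) (B : ℚ → Set ℕ) (W : ℕ → Set ℕ),
      ¬ ComputablePred (· ∈ A) ∧
      LimitComputable A ∧
      (∀ q ∈ Set.Ioo (1 : ℚ) 2, BfoEquiv (B q) A) ∧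
      (∀ n, BfoEquiv (W n) A) ∧
      (∀ p ∈ Set.Ioo (1 : ℚ) 2, ∀ q ∈ Set.Ioo (1 : ℚ) 2,
        p < q → OneOneLt (B p) (B q)) ∧
      (∀ n m, n ≠ m → ¬ OneOneRed (W n) (W m)) := by
  classical
  refine ⟨DCon.Aset, fun q => DCon.Blk (DCon.bsize q), fun n => DCon.Blk (DCon.tsize n),
    DCon.Aset_not_computable, DCon.Aset_limit, ?_, ?_, ?_, ?_⟩
  · intro q _
    exact DCon.blk_bfoEquiv (DCon.bsize_ok q) (DCon.bsize_computable q)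
  · intro n
    exact DCon.blk_bfoEquiv (DCon.tsize_ok n) (DCon.tsize_computable n)
  · intro p hp q hq hpq
    constructor
    · exact DCon.blk_oneOneRed (DCon.bsize_computable p) (DCon.bsize_computable q)
        (DCon.bsize_mono hp hq hpq.le)
    · exact DCon.blk_not_oneOneRed (DCon.bsize_ok q) (DCon.bsize_ok p)
        (DCon.bsize_computable q) (DCon.bsize_computable p)
        (DCon.bsize_strict_infinite hp hq hpq)
  · intro n m hnm
    exact DCon.blk_not_oneOneRed (DCon.tsize_ok n) (DCon.tsize_ok m)
      (DCon.tsize_computable n) (DCon.tsize_computable m)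
      (DCon.tsize_strict_infinite hnm)
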